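/- Let C be a closed subset of a Euclidean space X, w ∈ C, and let (x_n) be a sequence in X. Suppose there exist δ > 0, ρ ∈ [0,1), σ > 0 such that whenever x_n ∈ B(w, δ) one has d_C(x_{n+1}) ≤ ρ d_C(x_n) and ‖x_{n+1} - x_n‖ ≤ σ d_C(x_n). If x_0 ∈ B(w, δ(1-ρ)/(σ + 1 - ρ)), then x_n ∈ B(w, δ) for all n, and consequently (x_n) converges R-linearly to a point of C ∩ B(w, δ) with rate ρ. -/

import Mathlib

open Metric Set Filter Topology

/-- if the decrease conditions hold whenever the iterate lies in
`B(w, δ)` and the starting point is close enough to `w`, then the whole sequence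
stays in `B(w, δ)` and converges R-linearly to a point of `C ∩ B(w, δ)`. -/
theorem rlinear_convergence_local
    {X : Type*} [NormedAddCommGroup X] [InnerProductSpace ℝ X] [FiniteDimensional ℝ X]
    (C : Set X) (hCcl : IsClosed C) (hCne : C.Nonempty)
    (w : X) (hw : w ∈ C) (δ ρ σ : ℝ) (hδ : 0 < δ) (hρ0 : 0 ≤ ρ) (hρ1 : ρ < 1)
    (hσ : 0 < σ) (x : ℕ → X)
    (hstep : ∀ n, x n ∈ closedBall w δ →
      Metric.infDist (x (n + 1)) C ≤ ρ * Metric.infDist (x n) C ∧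
      ‖x (n + 1) - x n‖ ≤ σ * Metric.infDist (x n) C)
    (hx0 : x 0 ∈ closedBall w (δ * (1 - ρ) / (σ + 1 - ρ))) :
    (∀ n, x n ∈ closedBall w δ) ∧
    ∃ xb ∈ C ∩ closedBall w δ,
      Tendsto x atTop (nhds xb) ∧
      ∃ σ' : ℝ, 0 ≤ σ' ∧ ∀ n, ‖x n - xb‖ ≤ σ' * ρ ^ n := by
  have h1ρ : (0:ℝ) < 1 - ρ := by linarith
  have hden : (0:ℝ) < σ + 1 - ρ := by linarith
  set r0 : ℝ := δ * (1 - ρ) / (σ + 1 - ρ) with hr0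
  have hr0pos : 0 < r0 := by positivity
  have hr0δ : r0 ≤ δ := by
    rw [hr0, div_le_iff₀ hden]
    nlinarith
  set d0 : ℝ := infDist (x 0) C with hd0
  have hd0nn : (0:ℝ) ≤ d0 := infDist_nonneg
  have hd0r0 : d0 ≤ r0 :=
    le_trans (infDist_le_dist_of_mem hw) (by simpa [mem_closedBall] using hx0)
  have hδeq : σ * r0 / (1 - ρ) + r0 = δ := by
    rw [hr0]; field_simp; ring
  have hsum_le : ∀ n : ℕ, (∑ i ∈ Finset.range n, ρ ^ i) ≤ 1 / (1 - ρ) := by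
    intro n
    rw [geom_sum_eq (by linarith : ρ ≠ 1)]
    have h : (ρ ^ n - 1) / (ρ - 1) = (1 - ρ ^ n) / (1 - ρ) := by
      rw [← neg_div_neg_eq]; ring_nf
    rw [h]
    exact (div_le_div_iff_of_pos_right h1ρ).mpr (by nlinarith [pow_nonneg hρ0 n])
  have key : ∀ n, x n ∈ closedBall w δ ∧ infDist (x n) C ≤ ρ ^ n * d0 ∧
      dist (x n) (x 0) ≤ σ * d0 * ∑ i ∈ Finset.range n, ρ ^ i := by
    intro n
    induction n with
    | zero =>
      refine ⟨closedBall_subset_closedBall hr0δ hx0, by simp [hd0], by simp⟩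
    | succ n ih =>
      obtain ⟨hball, hinf, hdist⟩ := ih
      obtain ⟨h1, h2⟩ := hstep n hball
      have hinf' : infDist (x (n+1)) C ≤ ρ ^ (n+1) * d0 := by
        calc infDist (x (n+1)) C ≤ ρ * infDist (x n) C := h1
          _ ≤ ρ * (ρ ^ n * d0) := by
              exact mul_le_mul_of_nonneg_left hinf hρ0
          _ = ρ ^ (n+1) * d0 := by ring
      have hstepdist : dist (x (n+1)) (x n) ≤ σ * (ρ ^ n * d0) := by
        calc dist (x (n+1)) (x n) = ‖x (n+1) - x n‖ := by rw [dist_eq_norm]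
          _ ≤ σ * infDist (x n) C := h2
          _ ≤ σ * (ρ ^ n * d0) := mul_le_mul_of_nonneg_left hinf hσ.le
      have hdist' : dist (x (n+1)) (x 0) ≤ σ * d0 * ∑ i ∈ Finset.range (n+1), ρ ^ i := by
        calc dist (x (n+1)) (x 0) ≤ dist (x (n+1)) (x n) + dist (x n) (x 0) :=
              dist_triangle _ _ _
          _ ≤ σ * (ρ ^ n * d0) + σ * d0 * ∑ i ∈ Finset.range n, ρ ^ i := by
              exact add_le_add hstepdist hdist
          _ = σ * d0 * ∑ i ∈ Finset.range (n+1), ρ ^ i := by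
              rw [Finset.sum_range_succ]; ring
      refine ⟨?_, hinf', hdist'⟩
      rw [mem_closedBall]
      have hx0w : dist (x 0) w ≤ r0 := by simpa [mem_closedBall] using hx0
      have hs := hsum_le (n+1)
      have hσd0 : σ * d0 * ∑ i ∈ Finset.range (n+1), ρ ^ i ≤ σ * r0 / (1 - ρ) := by
        have hnn : (0:ℝ) ≤ ∑ i ∈ Finset.range (n+1), ρ ^ i :=
          Finset.sum_nonneg fun i _ => pow_nonneg hρ0 i
        calc σ * d0 * ∑ i ∈ Finset.range (n+1), ρ ^ i
            ≤ σ * r0 * ∑ i ∈ Finset.range (n+1), ρ ^ i := by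
              exact mul_le_mul_of_nonneg_right (by nlinarith) hnn
          _ ≤ σ * r0 * (1 / (1 - ρ)) := by
              exact mul_le_mul_of_nonneg_left hs (by positivity)
          _ = σ * r0 / (1 - ρ) := by ring
      calc dist (x (n+1)) w ≤ dist (x (n+1)) (x 0) + dist (x 0) w := dist_triangle _ _ _
        _ ≤ σ * r0 / (1 - ρ) + r0 := add_le_add (hdist'.trans hσd0) hx0w
        _ = δ := hδeq
  refine ⟨fun n => (key n).1, ?_⟩
  have hgeom : ∀ n, dist (x n) (x (n+1)) ≤ (σ * d0) * ρ ^ n := by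
    intro n
    have h := (hstep n (key n).1).2
    calc dist (x n) (x (n+1)) = ‖x (n+1) - x n‖ := by rw [dist_comm, dist_eq_norm]
      _ ≤ σ * infDist (x n) C := h
      _ ≤ σ * (ρ ^ n * d0) := mul_le_mul_of_nonneg_left (key n).2.1 hσ.le
      _ = σ * d0 * ρ ^ n := by ring
  have hcauchy : CauchySeq x := cauchySeq_of_le_geometric ρ (σ * d0) hρ1 hgeom
  obtain ⟨xb, hxb⟩ := cauchySeq_tendsto_of_complete hcauchy
  have hdistb : ∀ n, dist (x n) xb ≤ (σ * d0) * ρ ^ n / (1 - ρ) := fun n =>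
    dist_le_of_le_geometric_of_tendsto ρ (σ * d0) hρ1 hgeom hxb n
  have hinf0 : Tendsto (fun n => infDist (x n) C) atTop (𝓝 0) := by
    have hpow : Tendsto (fun n : ℕ => ρ ^ n * d0) atTop (𝓝 0) := by
      simpa using (tendsto_pow_atTop_nhds_zero_of_lt_one hρ0 hρ1).mul_const d0
    exact squeeze_zero (fun n => infDist_nonneg) (fun n => (key n).2.1) hpow
  have hinfxb : Tendsto (fun n => infDist (x n) C) atTop (𝓝 (infDist xb C)) :=
    ((continuous_infDist_pt C).continuousAt.tendsto).comp hxb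
  have hinfzero : infDist xb C = 0 := tendsto_nhds_unique hinfxb hinf0
  have hxbC : xb ∈ C := (hCcl.mem_iff_infDist_zero hCne).mpr hinfzero
  have hxbball : xb ∈ closedBall w δ :=
    isClosed_closedBall.mem_of_tendsto hxb (Eventually.of_forall fun n => (key n).1)
  refine ⟨xb, ⟨hxbC, hxbball⟩, hxb, σ * d0 / (1 - ρ), by positivity, fun n => ?_⟩
  calc ‖x n - xb‖ = dist (x n) xb := (dist_eq_norm _ _).symm
    _ ≤ σ * d0 * ρ ^ n / (1 - ρ) := hdistb n
    _ = σ * d0 / (1 - ρ) * ρ ^ n := by ring
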